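/- The constraint X ≤_m Y is GAC if and only if for every i < n both of the following hold: (1) the multiset {min(DX 0), …, min(DX (i−1)), max(DX i), min(DX (i+1)), …, min(DX (n−1))} ≤_m ceiling(Y); and (2) floor(X) ≤_m the multiset {max(DY 0), …, max(DY (i−1)), min(DY i), max(DY (i+1)), …, max(DY (n−1))}. -/

import Mathlib

namespace MsetPaper

/-- The maximum element of a multiset of naturals (`0` for the empty multiset). -/
def mmax (s : Multiset ℕ) : ℕ := s.sup

/-- The strict multiset order `x <ₘ y` of the paper: either `x` is empty and `y` is not,
or both are nonempty and either `max x < max y`, or the maxima agree and the multisets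
with one occurrence of the maximum removed are again strictly ordered. -/
inductive MLt : Multiset ℕ → Multiset ℕ → Prop
  | empty {y : Multiset ℕ} : y ≠ 0 → MLt 0 y
  | maxLt {x y : Multiset ℕ} : x ≠ 0 → y ≠ 0 → mmax x < mmax y → MLt x y
  | maxEq {x y : Multiset ℕ} : x ≠ 0 → y ≠ 0 → mmax x = mmax y →
      MLt (x.erase (mmax x)) (y.erase (mmax y)) → MLt x y

/-- The (non-strict) multiset order `x ≤ₘ y`. -/
def MLe (x y : Multiset ℕ) : Prop := MLt x y ∨ x = y

/-- The multiset of values taken by a vector. -/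
def msetOf {n : ℕ} (x : Fin n → ℕ) : Multiset ℕ := (List.ofFn x : List ℕ)

lemma mmax_cons (a : ℕ) (s : Multiset ℕ) : mmax (a ::ₘ s) = max a (mmax s) := by
  simp [mmax, Multiset.sup_cons]

lemma mmax_mem {s : Multiset ℕ} (hs : s ≠ 0) : mmax s ∈ s := by
  induction s using Multiset.induction with
  | empty => exact absurd rfl hs
  | cons a t ih =>
    rw [mmax_cons]
    rcases eq_or_ne t 0 with rfl | ht
    · simp [mmax]
    · rcases le_total a (mmax t) with h | h
      · rw [max_eq_right h]; exact Multiset.mem_cons_of_mem (ih ht)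
      · rw [max_eq_left h]; exact Multiset.mem_cons_self a t

lemma le_mmax {a : ℕ} {s : Multiset ℕ} (h : a ∈ s) : a ≤ mmax s := Multiset.le_sup h

lemma mmax_ne_zero {s : Multiset ℕ} (h : mmax s ≠ 0) : s ≠ 0 := by
  rintro rfl; exact h rfl

lemma mlt_cons_lt : ∀ (s : Multiset ℕ) (a b : ℕ), a < b → MLt (a ::ₘ s) (b ::ₘ s) := by
  intro s
  induction s using Multiset.strongInductionOn with
  | _ s IH =>
  intro a b hab
  rcases lt_or_ge (mmax s) b with hb | hb
  · exact MLt.maxLt (Multiset.cons_ne_zero) (Multiset.cons_ne_zero)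
      (by rw [mmax_cons, mmax_cons]; omega)
  · have hs : s ≠ 0 := mmax_ne_zero (by omega)
    have hm : mmax s ∈ s := mmax_mem hs
    have h1 : mmax (a ::ₘ s) = mmax s := by rw [mmax_cons]; omega
    have h2 : mmax (b ::ₘ s) = mmax s := by rw [mmax_cons]; omega
    refine MLt.maxEq Multiset.cons_ne_zero Multiset.cons_ne_zero (by rw [h1, h2]) ?_
    rw [h1, h2, Multiset.erase_cons_tail s (show a ≠ mmax s by omega)]
    rcases eq_or_lt_of_le hb with heq | hblt
    · subst heq
      rw [Multiset.erase_cons_head]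
      conv_rhs => rw [← Multiset.cons_erase hm]
      exact IH (s.erase (mmax s)) (Multiset.erase_lt.mpr hm) a _ hab
    · rw [Multiset.erase_cons_tail s (show b ≠ mmax s by omega)]
      exact IH (s.erase (mmax s)) (Multiset.erase_lt.mpr hm) a b hab

lemma mlt_cons_right {s t : Multiset ℕ} (h : MLt s t) (a : ℕ) :
    MLt (a ::ₘ s) (a ::ₘ t) := by
  induction h with
  | @empty t ht =>
    rcases lt_or_ge a (mmax t) with h1 | h1
    · exact MLt.maxLt Multiset.cons_ne_zero Multiset.cons_ne_zero
        (by have h0 : mmax (0:Multiset ℕ) = 0 := rfl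
            rw [mmax_cons, mmax_cons]; omega)
    · refine MLt.maxEq Multiset.cons_ne_zero Multiset.cons_ne_zero
        (by have h0 : mmax (0:Multiset ℕ) = 0 := rfl
            rw [mmax_cons, mmax_cons]; omega) ?_
      have e1 : mmax (a ::ₘ (0:Multiset ℕ)) = a := by
        have h0 : mmax (0:Multiset ℕ) = 0 := rfl
        rw [mmax_cons]; omega
      have e2 : mmax (a ::ₘ t) = a := by rw [mmax_cons]; omega
      rw [e1, e2, Multiset.erase_cons_head, Multiset.erase_cons_head]
      exact MLt.empty ht
  | @maxLt s t hs ht hlt =>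
    rcases lt_or_ge a (mmax t) with h1 | h1
    · rcases lt_or_ge a (mmax s) with h2 | h2
      · exact MLt.maxLt Multiset.cons_ne_zero Multiset.cons_ne_zero
          (by rw [mmax_cons, mmax_cons]; omega)
      · exact MLt.maxLt Multiset.cons_ne_zero Multiset.cons_ne_zero
          (by rw [mmax_cons, mmax_cons]; omega)
    · -- mmax t ≤ a, both maxima are a
      have e1 : mmax (a ::ₘ s) = a := by rw [mmax_cons]; omega
      have e2 : mmax (a ::ₘ t) = a := by rw [mmax_cons]; omega
      refine MLt.maxEq Multiset.cons_ne_zero Multiset.cons_ne_zero (by rw [e1, e2]) ?_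
      rw [e1, e2, Multiset.erase_cons_head, Multiset.erase_cons_head]
      exact MLt.maxLt hs ht hlt
  | @maxEq s t hs ht heq hrec IH =>
    have e12 : mmax (a ::ₘ s) = mmax (a ::ₘ t) := by rw [mmax_cons, mmax_cons, heq]
    refine MLt.maxEq Multiset.cons_ne_zero Multiset.cons_ne_zero e12 ?_
    rcases lt_or_ge a (mmax s) with h1 | h1
    · have e1 : mmax (a ::ₘ s) = mmax s := by rw [mmax_cons]; omega
      have e2 : mmax (a ::ₘ t) = mmax t := by rw [mmax_cons]; omega
      rw [e1, e2, Multiset.erase_cons_tail s (by omega),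
        Multiset.erase_cons_tail t (by rw [← heq]; omega)]
      exact IH
    · have e1 : mmax (a ::ₘ s) = a := by rw [mmax_cons]; omega
      have e2 : mmax (a ::ₘ t) = a := by rw [mmax_cons, ← heq]; omega
      rw [e1, e2, Multiset.erase_cons_head, Multiset.erase_cons_head]
      exact MLt.maxEq hs ht heq hrec

lemma mlt_trans : ∀ (x y z : Multiset ℕ), MLt x y → MLt y z → MLt x z := by
  intro x
  induction x using Multiset.strongInductionOn with
  | _ x IH =>
  intro y z hxy hyz
  have hy : y ≠ 0 := by
    cases hxy with
    | empty h => exact h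
    | maxLt _ h _ => exact h
    | maxEq _ h _ _ => exact h
  have hz : z ≠ 0 := by
    cases hyz with
    | empty h => exact absurd rfl hy
    | maxLt _ h _ => exact h
    | maxEq _ h _ _ => exact h
  cases hxy with
  | empty _ => exact MLt.empty hz
  | maxLt hx _ h1 =>
    cases hyz with
    | empty _ => exact absurd rfl hy
    | maxLt _ _ h2 => exact MLt.maxLt hx hz (by omega)
    | maxEq _ _ h2 _ => exact MLt.maxLt hx hz (by omega)
  | maxEq hx _ h1 hr1 =>
    cases hyz with
    | empty _ => exact absurd rfl hy
    | maxLt _ _ h2 => exact MLt.maxLt hx hz (by omega)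
    | maxEq _ _ h2 hr2 =>
      refine MLt.maxEq hx hz (by omega) ?_
      exact IH (x.erase (mmax x)) (Multiset.erase_lt.mpr (mmax_mem hx)) _ _ hr1 hr2

lemma mle_trans {x y z : Multiset ℕ} (h1 : MLe x y) (h2 : MLe y z) : MLe x z := by
  rcases h1 with h1 | rfl
  · rcases h2 with h2 | rfl
    · exact Or.inl (mlt_trans _ _ _ h1 h2)
    · exact Or.inl h1
  · exact h2

lemma mle_cons_right {s t : Multiset ℕ} (h : MLe s t) (a : ℕ) :
    MLe (a ::ₘ s) (a ::ₘ t) := by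
  rcases h with h | rfl
  · exact Or.inl (mlt_cons_right h a)
  · exact Or.inr rfl

lemma mle_cons_le {a b : ℕ} (h : a ≤ b) (s : Multiset ℕ) : MLe (a ::ₘ s) (b ::ₘ s) := by
  rcases eq_or_lt_of_le h with rfl | h
  · exact Or.inr rfl
  · exact Or.inl (mlt_cons_lt s a b h)

lemma rel_mle {s t : Multiset ℕ} (h : Multiset.Rel (· ≤ ·) s t) : MLe s t := by
  induction h with
  | zero => exact Or.inr rfl
  | @cons a b s t hab _ IH =>
    exact mle_trans (mle_cons_right IH a) (mle_cons_le hab t)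

lemma rel_msetOf : ∀ {n : ℕ} (x y : Fin n → ℕ), (∀ i, x i ≤ y i) →
    Multiset.Rel (· ≤ ·) (msetOf x) (msetOf y) := by
  intro n
  induction n with
  | zero =>
    intro x y _
    simp only [msetOf, List.ofFn_zero, Multiset.coe_nil]
    exact Multiset.Rel.zero
  | succ n ih =>
    intro x y h
    have hx : msetOf x = x 0 ::ₘ msetOf (fun i => x i.succ) := by
      simp [msetOf, List.ofFn_succ]
    have hy : msetOf y = y 0 ::ₘ msetOf (fun i => y i.succ) := by
      simp [msetOf, List.ofFn_succ]
    rw [hx, hy]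
    exact Multiset.Rel.cons (h 0) (ih _ _ fun i => h i.succ)

lemma mle_mono {n : ℕ} {x x' y y' : Fin n → ℕ} (hx : ∀ i, x' i ≤ x i)
    (hy : ∀ i, y i ≤ y' i) (h : MLe (msetOf x) (msetOf y)) :
    MLe (msetOf x') (msetOf y') :=
  mle_trans (rel_mle (rel_msetOf _ _ hx)) (mle_trans h (rel_mle (rel_msetOf _ _ hy)))


/-- `(x, y)` is a satisfying assignment for the constraint `X ≤ₘ Y`. -/
def SatLe {n : ℕ} (DX DY : Fin n → Finset ℕ) (x y : Fin n → ℕ) : Prop :=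
  (∀ i, x i ∈ DX i) ∧ (∀ i, y i ∈ DY i) ∧ MLe (msetOf x) (msetOf y)

/-- The value `v` is consistent for the variable `X i`. -/
def ConsX {n : ℕ} (DX DY : Fin n → Finset ℕ) (i : Fin n) (v : ℕ) : Prop :=
  ∃ x y, SatLe DX DY x y ∧ x i = v

/-- The value `v` is consistent for the variable `Y i`. -/
def ConsY {n : ℕ} (DX DY : Fin n → Finset ℕ) (i : Fin n) (v : ℕ) : Prop :=
  ∃ x y, SatLe DX DY x y ∧ y i = v

/-- The constraint `X ≤ₘ Y` is generalised arc-consistent. -/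
def GACLe {n : ℕ} (DX DY : Fin n → Finset ℕ) : Prop :=
  (∀ i, ∀ v ∈ DX i, ConsX DX DY i v) ∧ (∀ i, ∀ v ∈ DY i, ConsY DX DY i v)

/-- Theorem 3 of the paper: `X ≤ₘ Y` is GAC iff for all `i`,
`floor(X)` with `X i` set to its maximum is `≤ₘ ceiling(Y)`, and
`floor(X) ≤ₘ ceiling(Y)` with `Y i` set to its minimum. -/
theorem stmt2 (n : ℕ) (hn : 1 ≤ n) (DX DY : Fin n → Finset ℕ)
    (hDX : ∀ i, (DX i).Nonempty) (hDY : ∀ i, (DY i).Nonempty) :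
    GACLe DX DY ↔
      ∀ i : Fin n,
        MLe (msetOf (Function.update (fun j => (DX j).min' (hDX j)) i ((DX i).max' (hDX i))))
            (msetOf fun j => (DY j).max' (hDY j)) ∧
        MLe (msetOf fun j => (DX j).min' (hDX j))
            (msetOf (Function.update (fun j => (DY j).max' (hDY j)) i ((DY i).min' (hDY i)))) := by
  constructor
  · rintro ⟨hX, hY⟩ i
    constructor
    · obtain ⟨x, y, ⟨hx, hy, hxy⟩, hxi⟩ := hX i _ ((DX i).max'_mem (hDX i))
      refine mle_mono ?_ ?_ hxy
      · intro j
        rcases eq_or_ne j i with rfl | hj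
        · rw [Function.update_self]; exact le_of_eq hxi.symm
        · rw [Function.update_of_ne hj]; exact Finset.min'_le _ _ (hx j)
      · intro j; exact Finset.le_max' _ _ (hy j)
    · obtain ⟨x, y, ⟨hx, hy, hxy⟩, hyi⟩ := hY i _ ((DY i).min'_mem (hDY i))
      refine mle_mono ?_ ?_ hxy
      · intro j; exact Finset.min'_le _ _ (hx j)
      · intro j
        rcases eq_or_ne j i with rfl | hj
        · rw [Function.update_self]; exact le_of_eq hyi
        · rw [Function.update_of_ne hj]; exact Finset.le_max' _ _ (hy j)
  · intro h
    constructor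
    · intro i v hv
      refine ⟨Function.update (fun j => (DX j).min' (hDX j)) i v,
        fun j => (DY j).max' (hDY j), ⟨?_, fun j => (DY j).max'_mem _, ?_⟩,
        Function.update_self ..⟩
      · intro j
        rcases eq_or_ne j i with rfl | hj
        · rwa [Function.update_self]
        · rw [Function.update_of_ne hj]; exact Finset.min'_mem _ _
      · refine mle_mono ?_ (fun j => le_refl _) (h i).1
        intro j
        rcases eq_or_ne j i with rfl | hj
        · rw [Function.update_self, Function.update_self]
          exact Finset.le_max' _ _ hv
        · rw [Function.update_of_ne hj, Function.update_of_ne hj]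
    · intro i v hv
      refine ⟨fun j => (DX j).min' (hDX j),
        Function.update (fun j => (DY j).max' (hDY j)) i v,
        ⟨fun j => Finset.min'_mem _ _, ?_, ?_⟩, Function.update_self ..⟩
      · intro j
        rcases eq_or_ne j i with rfl | hj
        · rwa [Function.update_self]
        · rw [Function.update_of_ne hj]; exact Finset.max'_mem _ _
      · refine mle_mono (fun j => le_refl _) ?_ (h i).2
        intro j
        rcases eq_or_ne j i with rfl | hj
        · rw [Function.update_self, Function.update_self]
          exact Finset.min'_le _ _ hv
        · rw [Function.update_of_ne hj, Function.update_of_ne hj]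

end MsetPaper
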